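/- (Attack at (i,j−1), Table 1.) Let c ∈ ℤ/7ℤ and let (i,j) ∈ ℤ × ℤ satisfy 3i + j ≡ c (mod 7), and set c' = i + 2(j−1) (mod 7). Then: (a) the seven points (i,j), (i+1,j−3), (i+3,j−2), (i+5,j−1), (i+4,j+2), (i+2,j+1), (i−1,j+3) all lie in D_c and, together with all their translates by vectors (7a,7b) with a,b ∈ ℤ, they exhaust D_c, each element of D_c arising exactly once; (b) the map φ that sends, for all a,b ∈ ℤ, (i,j)+(7a,7b) ↦ (i,j−1)+(7a,7b), (i+1,j−3)+(7a,7b) ↦ (i+2,j−2)+(7a,7b), (i+3,j−2)+(7a,7b) ↦ (i+4,j−3)+(7a,7b), (i+5,j−1)+(7a,7b) ↦ (i+5,j)+(7a,7b), (i+4,j+2)+(7a,7b) ↦ (i+3,j+1)+(7a,7b), (i+2,j+1)+(7a,7b) ↦ (i+1,j+2)+(7a,7b), and fixes every translate (i−1,j+3)+(7a,7b) (the anchors), is a well-defined bijection from D_c onto D'_{c'}; (c) every u ∈ D_c satisfies φ(u) = u or φ(u) adjacent to u in G∞; in particular the attacked vertex (i,j−1) ∈ D'_{c'} is occupied after the move.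 -/

import Mathlib

/-- The infinite strong grid on `ℤ × ℤ`: distinct vertices are adjacent iff both
coordinates differ by at most 1. -/
def strongGridInf : SimpleGraph (ℤ × ℤ) where
  Adj p q := p ≠ q ∧ |p.1 - q.1| ≤ 1 ∧ |p.2 - q.2| ≤ 1
  symm := by
    constructor
    intro p q h
    exact ⟨h.1.symm, by rw [abs_sub_comm]; exact h.2.1, by rw [abs_sub_comm]; exact h.2.2⟩
  loopless := by
    constructor
    intro p h
    exact h.1 rfl

/-- `S` is a dominating set of `G`: every vertex is in `S` or adjacent to a vertex of `S`. -/
def IsDomSet {V : Type*} (G : SimpleGraph V) (S : Set V) : Prop :=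
  ∀ v : V, v ∈ S ∨ ∃ u ∈ S, G.Adj v u

/-- `F` is an eternal domination family for `G`. -/
def IsEternalDomFamily {V : Type*} (G : SimpleGraph V) (F : Set (Set V)) : Prop :=
  F.Nonempty ∧ (∀ C ∈ F, IsDomSet G C) ∧
    ∀ C ∈ F, ∀ v : V, ∃ C' ∈ F, v ∈ C' ∧
      ∃ φ : C ≃ C', ∀ u : C, (φ u : V) = (u : V) ∨ G.Adj (u : V) (φ u : V)

/-- The configuration `D_c = {(i,j) : 3i + j ≡ c (mod 7)}`. -/
def Dset (c : ZMod 7) : Set (ℤ × ℤ) := {p | ((3 * p.1 + p.2 : ℤ) : ZMod 7) = c}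

/-- The configuration `D'_c = {(i,j) : i + 2j ≡ c (mod 7)}`. -/
def D'set (c : ZMod 7) : Set (ℤ × ℤ) := {p | ((p.1 + 2 * p.2 : ℤ) : ZMod 7) = c}

lemma key7 (a b : ℤ) : ((a : ZMod 7) = (b : ZMod 7)) ↔ a % 7 = b % 7 := by
  rw [ZMod.intCast_eq_intCast_iff, Int.ModEq]
  norm_num

lemma tile_EU (i j : ℤ) (ex ey : Fin 7 → ℤ)
    (hx : ∀ r : ℤ, 0 ≤ r → r < 7 → ∃ k, ex k % 7 = r)
    (hinj : ∀ k k' : Fin 7, ex k % 7 = ex k' % 7 → k = k')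
    (u : ℤ × ℤ)
    (hdet : ∀ k : Fin 7, ex k % 7 = (u.1 - i) % 7 → (u.2 - j - ey k) % 7 = 0) :
    ∃! q : Fin 7 × ℤ × ℤ, u = (i + ex q.1, j + ey q.1) + (7 * q.2.1, 7 * q.2.2) := by
  obtain ⟨k, hk⟩ := hx ((u.1 - i) % 7) (by omega) (by omega)
  have h2 := hdet k hk
  have h1 : (u.1 - i - ex k) % 7 = 0 := by omega
  refine ⟨⟨k, (u.1 - i - ex k) / 7, (u.2 - j - ey k) / 7⟩, ?_, ?_⟩
  · show u = (i + ex k, j + ey k) + (7 * ((u.1 - i - ex k) / 7), 7 * ((u.2 - j - ey k) / 7))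
    rw [Prod.ext_iff]
    constructor <;> simp <;> omega
  · rintro ⟨k', a', b'⟩ h'
    have h' : u = (i + ex k', j + ey k') + (7 * a', 7 * b') := h'
    rw [Prod.ext_iff] at h'
    simp only [Prod.fst_add, Prod.snd_add] at h'
    obtain ⟨h'1, h'2⟩ := h'
    have hk' : ex k' % 7 = (u.1 - i) % 7 := by omega
    have hkk : k' = k := hinj _ _ (by rw [hk', hk])
    subst hkk
    rw [Prod.mk.injEq, Prod.mk.injEq]
    exact ⟨rfl, by omega, by omega⟩

def dvec : ℤ → ℤ × ℤ := fun r =>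
  if r = 0 then (0, -1) else if r = 1 then (1, 1) else if r = 3 then (1, -1)
  else if r = 5 then (0, 1) else if r = 4 then (-1, -1) else if r = 2 then (-1, 1)
  else (0, 0)


lemma adj_add (u d : ℤ × ℤ) (hd : d ≠ 0) (h1 : |d.1| ≤ 1) (h2 : |d.2| ≤ 1) :
    strongGridInf.Adj u (u + d) := by
  refine ⟨?_, ?_, ?_⟩
  · intro h
    apply hd
    have h' : u + 0 = u + d := by rw [add_zero]; exact h
    exact (add_left_cancel h').symm
  · rw [Prod.fst_add, sub_add_cancel_left, abs_neg]; exact h1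
  · rw [Prod.snd_add, sub_add_cancel_left, abs_neg]; exact h2


/-- Table 1, attack at `(i, j−1)`: the seven listed guards (the last being the anchor) and their
translates by `(7a,7b)` tile `D_c` exactly; the indicated moves define a bijection
`f : D_c → D'_{c'}` with `c' = i + 2 * (j - 1) (mod 7)`, each guard staying in place or moving to an
adjacent vertex, and the attacked vertex `(i, j−1)` lies in `D'_{c'}`, hence is occupied. -/
theorem attack_left (c : ZMod 7) (i j : ℤ)
    (hij : ((3 * i + j : ℤ) : ZMod 7) = c)
    (pts tgt : Fin 7 → ℤ × ℤ)
    (hpts : pts = ![(i, j), (i + 1, j - 3), (i + 3, j - 2), (i + 5, j - 1), (i + 4, j + 2), (i + 2, j + 1), (i - 1, j + 3)])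
    (htgt : tgt = ![(i, j - 1), (i + 2, j - 2), (i + 4, j - 3), (i + 5, j), (i + 3, j + 1), (i + 1, j + 2), (i - 1, j + 3)]) :
    (∀ k : Fin 7, pts k ∈ Dset c) ∧
    (∀ u ∈ Dset c, ∃! q : Fin 7 × ℤ × ℤ, u = pts q.1 + (7 * q.2.1, 7 * q.2.2)) ∧
    ∃ f : ℤ × ℤ → ℤ × ℤ,
      (∀ k : Fin 7, ∀ a b : ℤ, f (pts k + (7 * a, 7 * b)) = tgt k + (7 * a, 7 * b)) ∧
      Set.BijOn f (Dset c) (D'set ((i + 2 * (j - 1) : ℤ) : ZMod 7)) ∧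
      (∀ u ∈ Dset c, f u = u ∨ strongGridInf.Adj u (f u)) ∧
      ((i, j - 1)) ∈ D'set ((i + 2 * (j - 1) : ℤ) : ZMod 7) := by
  subst hij hpts htgt
  have hDm : ∀ u : ℤ × ℤ, u ∈ Dset ((3 * i + j : ℤ) : ZMod 7) ↔ (3 * u.1 + u.2) % 7 = (3 * i + j) % 7 := fun u => key7 _ _
  have hD'm : ∀ u : ℤ × ℤ, u ∈ D'set ((i + 2 * (j - 1) : ℤ) : ZMod 7) ↔ (u.1 + 2 * u.2) % 7 = (i + 2 * (j - 1)) % 7 := fun u => key7 _ _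
  have hpe : ∀ k : Fin 7, (![(i, j), (i + 1, j - 3), (i + 3, j - 2), (i + 5, j - 1), (i + 4, j + 2), (i + 2, j + 1), (i - 1, j + 3)] : Fin 7 → ℤ × ℤ) k = (i + (![0, 1, 3, 5, 4, 2, -1] : Fin 7 → ℤ) k, j + (![0, -3, -2, -1, 2, 1, 3] : Fin 7 → ℤ) k) := by
    intro k
    fin_cases k
    · exact show ((i : ℤ), (j : ℤ)) = (i + 0, j + 0) by rw [Prod.mk.injEq]; exact ⟨by ring, by ring⟩
    · exact show ((i + 1 : ℤ), (j - 3 : ℤ)) = (i + 1, j + -3) by rw [Prod.mk.injEq]; exact ⟨by ring, by ring⟩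
    · exact show ((i + 3 : ℤ), (j - 2 : ℤ)) = (i + 3, j + -2) by rw [Prod.mk.injEq]; exact ⟨by ring, by ring⟩
    · exact show ((i + 5 : ℤ), (j - 1 : ℤ)) = (i + 5, j + -1) by rw [Prod.mk.injEq]; exact ⟨by ring, by ring⟩
    · exact show ((i + 4 : ℤ), (j + 2 : ℤ)) = (i + 4, j + 2) by rw [Prod.mk.injEq]; exact ⟨by ring, by ring⟩
    · exact show ((i + 2 : ℤ), (j + 1 : ℤ)) = (i + 2, j + 1) by rw [Prod.mk.injEq]; exact ⟨by ring, by ring⟩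
    · exact show ((i - 1 : ℤ), (j + 3 : ℤ)) = (i + -1, j + 3) by rw [Prod.mk.injEq]; exact ⟨by ring, by ring⟩
  have hte : ∀ k : Fin 7, (![(i, j - 1), (i + 2, j - 2), (i + 4, j - 3), (i + 5, j), (i + 3, j + 1), (i + 1, j + 2), (i - 1, j + 3)] : Fin 7 → ℤ × ℤ) k = (i + (![0, 2, 4, 5, 3, 1, -1] : Fin 7 → ℤ) k, j + (![-1, -2, -3, 0, 1, 2, 3] : Fin 7 → ℤ) k) := by
    intro k
    fin_cases k
    · exact show ((i : ℤ), (j - 1 : ℤ)) = (i + 0, j + -1) by rw [Prod.mk.injEq]; exact ⟨by ring, by ring⟩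
    · exact show ((i + 2 : ℤ), (j - 2 : ℤ)) = (i + 2, j + -2) by rw [Prod.mk.injEq]; exact ⟨by ring, by ring⟩
    · exact show ((i + 4 : ℤ), (j - 3 : ℤ)) = (i + 4, j + -3) by rw [Prod.mk.injEq]; exact ⟨by ring, by ring⟩
    · exact show ((i + 5 : ℤ), (j : ℤ)) = (i + 5, j + 0) by rw [Prod.mk.injEq]; exact ⟨by ring, by ring⟩
    · exact show ((i + 3 : ℤ), (j + 1 : ℤ)) = (i + 3, j + 1) by rw [Prod.mk.injEq]; exact ⟨by ring, by ring⟩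
    · exact show ((i + 1 : ℤ), (j + 2 : ℤ)) = (i + 1, j + 2) by rw [Prod.mk.injEq]; exact ⟨by ring, by ring⟩
    · exact show ((i - 1 : ℤ), (j + 3 : ℤ)) = (i + -1, j + 3) by rw [Prod.mk.injEq]; exact ⟨by ring, by ring⟩
  have hxD : ∀ r : ℤ, 0 ≤ r → r < 7 → ∃ k : Fin 7, (![0, 1, 3, 5, 4, 2, -1] : Fin 7 → ℤ) k % 7 = r := by
    intro r h1 h2
    interval_cases r
    exacts [⟨0, by decide⟩, ⟨1, by decide⟩, ⟨5, by decide⟩, ⟨2, by decide⟩, ⟨4, by decide⟩, ⟨3, by decide⟩, ⟨6, by decide⟩]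
  have hinjD : ∀ k k' : Fin 7, (![0, 1, 3, 5, 4, 2, -1] : Fin 7 → ℤ) k % 7 = (![0, 1, 3, 5, 4, 2, -1] : Fin 7 → ℤ) k' % 7 → k = k' := by decide
  have hxT : ∀ r : ℤ, 0 ≤ r → r < 7 → ∃ k : Fin 7, (![0, 2, 4, 5, 3, 1, -1] : Fin 7 → ℤ) k % 7 = r := by
    intro r h1 h2
    interval_cases r
    exacts [⟨0, by decide⟩, ⟨5, by decide⟩, ⟨1, by decide⟩, ⟨4, by decide⟩, ⟨2, by decide⟩, ⟨3, by decide⟩, ⟨6, by decide⟩]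
  have hinjT : ∀ k k' : Fin 7, (![0, 2, 4, 5, 3, 1, -1] : Fin 7 → ℤ) k % 7 = (![0, 2, 4, 5, 3, 1, -1] : Fin 7 → ℤ) k' % 7 → k = k' := by decide
  have hEU : ∀ u ∈ Dset ((3 * i + j : ℤ) : ZMod 7), ∃! q : Fin 7 × ℤ × ℤ, u = (![(i, j), (i + 1, j - 3), (i + 3, j - 2), (i + 5, j - 1), (i + 4, j + 2), (i + 2, j + 1), (i - 1, j + 3)] : Fin 7 → ℤ × ℤ) q.1 + (7 * q.2.1, 7 * q.2.2) := by
    intro u hu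
    have hm : (3 * u.1 + u.2) % 7 = (3 * i + j) % 7 := (hDm u).mp hu
    have hdet : ∀ k : Fin 7, (![0, 1, 3, 5, 4, 2, -1] : Fin 7 → ℤ) k % 7 = (u.1 - i) % 7 → (u.2 - j - (![0, -3, -2, -1, 2, 1, 3] : Fin 7 → ℤ) k) % 7 = 0 := by
      intro k hk
      fin_cases k
      · have hk' : (0 : ℤ) % 7 = (u.1 - i) % 7 := hk
        exact (by omega : (u.2 - j - (0 : ℤ)) % 7 = 0)
      · have hk' : (1 : ℤ) % 7 = (u.1 - i) % 7 := hk
        exact (by omega : (u.2 - j - (-3 : ℤ)) % 7 = 0)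
      · have hk' : (3 : ℤ) % 7 = (u.1 - i) % 7 := hk
        exact (by omega : (u.2 - j - (-2 : ℤ)) % 7 = 0)
      · have hk' : (5 : ℤ) % 7 = (u.1 - i) % 7 := hk
        exact (by omega : (u.2 - j - (-1 : ℤ)) % 7 = 0)
      · have hk' : (4 : ℤ) % 7 = (u.1 - i) % 7 := hk
        exact (by omega : (u.2 - j - (2 : ℤ)) % 7 = 0)
      · have hk' : (2 : ℤ) % 7 = (u.1 - i) % 7 := hk
        exact (by omega : (u.2 - j - (1 : ℤ)) % 7 = 0)
      · have hk' : (-1 : ℤ) % 7 = (u.1 - i) % 7 := hk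
        exact (by omega : (u.2 - j - (3 : ℤ)) % 7 = 0)
    have base := tile_EU i j (![0, 1, 3, 5, 4, 2, -1] : Fin 7 → ℤ) (![0, -3, -2, -1, 2, 1, 3] : Fin 7 → ℤ) hxD hinjD u hdet
    exact (existsUnique_congr (fun q => by rw [hpe q.1])).mp base
  have hEUT : ∀ w ∈ D'set ((i + 2 * (j - 1) : ℤ) : ZMod 7), ∃! q : Fin 7 × ℤ × ℤ, w = (![(i, j - 1), (i + 2, j - 2), (i + 4, j - 3), (i + 5, j), (i + 3, j + 1), (i + 1, j + 2), (i - 1, j + 3)] : Fin 7 → ℤ × ℤ) q.1 + (7 * q.2.1, 7 * q.2.2) := by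
    intro w hw
    have hm : (w.1 + 2 * w.2) % 7 = (i + 2 * (j - 1)) % 7 := (hD'm w).mp hw
    have hdet : ∀ k : Fin 7, (![0, 2, 4, 5, 3, 1, -1] : Fin 7 → ℤ) k % 7 = (w.1 - i) % 7 → (w.2 - j - (![-1, -2, -3, 0, 1, 2, 3] : Fin 7 → ℤ) k) % 7 = 0 := by
      intro k hk
      fin_cases k
      · have hk' : (0 : ℤ) % 7 = (w.1 - i) % 7 := hk
        exact (by omega : (w.2 - j - (-1 : ℤ)) % 7 = 0)
      · have hk' : (2 : ℤ) % 7 = (w.1 - i) % 7 := hk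
        exact (by omega : (w.2 - j - (-2 : ℤ)) % 7 = 0)
      · have hk' : (4 : ℤ) % 7 = (w.1 - i) % 7 := hk
        exact (by omega : (w.2 - j - (-3 : ℤ)) % 7 = 0)
      · have hk' : (5 : ℤ) % 7 = (w.1 - i) % 7 := hk
        exact (by omega : (w.2 - j - (0 : ℤ)) % 7 = 0)
      · have hk' : (3 : ℤ) % 7 = (w.1 - i) % 7 := hk
        exact (by omega : (w.2 - j - (1 : ℤ)) % 7 = 0)
      · have hk' : (1 : ℤ) % 7 = (w.1 - i) % 7 := hk
        exact (by omega : (w.2 - j - (2 : ℤ)) % 7 = 0)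
      · have hk' : (-1 : ℤ) % 7 = (w.1 - i) % 7 := hk
        exact (by omega : (w.2 - j - (3 : ℤ)) % 7 = 0)
    have base := tile_EU i j (![0, 2, 4, 5, 3, 1, -1] : Fin 7 → ℤ) (![-1, -2, -3, 0, 1, 2, 3] : Fin 7 → ℤ) hxT hinjT w hdet
    exact (existsUnique_congr (fun q => by rw [hte q.1])).mp base
  have hpart1 : ∀ k : Fin 7, (![(i, j), (i + 1, j - 3), (i + 3, j - 2), (i + 5, j - 1), (i + 4, j + 2), (i + 2, j + 1), (i - 1, j + 3)] : Fin 7 → ℤ × ℤ) k ∈ Dset ((3 * i + j : ℤ) : ZMod 7) := by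
    intro k
    rw [hDm]
    fin_cases k
    · exact (by omega : (3 * (i) + (j)) % 7 = (3 * i + j) % 7)
    · exact (by omega : (3 * (i + 1) + (j - 3)) % 7 = (3 * i + j) % 7)
    · exact (by omega : (3 * (i + 3) + (j - 2)) % 7 = (3 * i + j) % 7)
    · exact (by omega : (3 * (i + 5) + (j - 1)) % 7 = (3 * i + j) % 7)
    · exact (by omega : (3 * (i + 4) + (j + 2)) % 7 = (3 * i + j) % 7)
    · exact (by omega : (3 * (i + 2) + (j + 1)) % 7 = (3 * i + j) % 7)
    · exact (by omega : (3 * (i - 1) + (j + 3)) % 7 = (3 * i + j) % 7)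
  have hDt : ∀ (k : Fin 7) (a b : ℤ), (![(i, j), (i + 1, j - 3), (i + 3, j - 2), (i + 5, j - 1), (i + 4, j + 2), (i + 2, j + 1), (i - 1, j + 3)] : Fin 7 → ℤ × ℤ) k + (7 * a, 7 * b) ∈ Dset ((3 * i + j : ℤ) : ZMod 7) := by
    intro k a b
    rw [hDm]
    fin_cases k
    · exact (by omega : (3 * ((i) + 7 * a) + ((j) + 7 * b)) % 7 = (3 * i + j) % 7)
    · exact (by omega : (3 * ((i + 1) + 7 * a) + ((j - 3) + 7 * b)) % 7 = (3 * i + j) % 7)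
    · exact (by omega : (3 * ((i + 3) + 7 * a) + ((j - 2) + 7 * b)) % 7 = (3 * i + j) % 7)
    · exact (by omega : (3 * ((i + 5) + 7 * a) + ((j - 1) + 7 * b)) % 7 = (3 * i + j) % 7)
    · exact (by omega : (3 * ((i + 4) + 7 * a) + ((j + 2) + 7 * b)) % 7 = (3 * i + j) % 7)
    · exact (by omega : (3 * ((i + 2) + 7 * a) + ((j + 1) + 7 * b)) % 7 = (3 * i + j) % 7)
    · exact (by omega : (3 * ((i - 1) + 7 * a) + ((j + 3) + 7 * b)) % 7 = (3 * i + j) % 7)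
  have htr : ∀ (k : Fin 7) (a b : ℤ), (fun u : ℤ × ℤ => u + dvec ((u.1 - i) % 7)) ((![(i, j), (i + 1, j - 3), (i + 3, j - 2), (i + 5, j - 1), (i + 4, j + 2), (i + 2, j + 1), (i - 1, j + 3)] : Fin 7 → ℤ × ℤ) k + (7 * a, 7 * b)) = (![(i, j - 1), (i + 2, j - 2), (i + 4, j - 3), (i + 5, j), (i + 3, j + 1), (i + 1, j + 2), (i - 1, j + 3)] : Fin 7 → ℤ × ℤ) k + (7 * a, 7 * b) := by
    intro k a b
    fin_cases k
    · show ((i, j) : ℤ × ℤ) + (7 * a, 7 * b) + dvec (((((i, j) : ℤ × ℤ) + ((7 * a : ℤ), (7 * b : ℤ))).1 - i) % 7) = ((i, j - 1) : ℤ × ℤ) + (7 * a, 7 * b)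
      rw [show (((((i, j) : ℤ × ℤ) + ((7 * a : ℤ), (7 * b : ℤ))).1 - i) % 7) = 0 from by show ((i) + 7 * a - i) % 7 = 0; omega]
      rw [show dvec 0 = ((0 : ℤ), (-1 : ℤ)) from rfl]
      simp only [Prod.mk_add_mk, Prod.mk.injEq]
      exact ⟨by ring, by ring⟩
    · show ((i + 1, j - 3) : ℤ × ℤ) + (7 * a, 7 * b) + dvec (((((i + 1, j - 3) : ℤ × ℤ) + ((7 * a : ℤ), (7 * b : ℤ))).1 - i) % 7) = ((i + 2, j - 2) : ℤ × ℤ) + (7 * a, 7 * b)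
      rw [show (((((i + 1, j - 3) : ℤ × ℤ) + ((7 * a : ℤ), (7 * b : ℤ))).1 - i) % 7) = 1 from by show ((i + 1) + 7 * a - i) % 7 = 1; omega]
      rw [show dvec 1 = ((1 : ℤ), (1 : ℤ)) from rfl]
      simp only [Prod.mk_add_mk, Prod.mk.injEq]
      exact ⟨by ring, by ring⟩
    · show ((i + 3, j - 2) : ℤ × ℤ) + (7 * a, 7 * b) + dvec (((((i + 3, j - 2) : ℤ × ℤ) + ((7 * a : ℤ), (7 * b : ℤ))).1 - i) % 7) = ((i + 4, j - 3) : ℤ × ℤ) + (7 * a, 7 * b)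
      rw [show (((((i + 3, j - 2) : ℤ × ℤ) + ((7 * a : ℤ), (7 * b : ℤ))).1 - i) % 7) = 3 from by show ((i + 3) + 7 * a - i) % 7 = 3; omega]
      rw [show dvec 3 = ((1 : ℤ), (-1 : ℤ)) from rfl]
      simp only [Prod.mk_add_mk, Prod.mk.injEq]
      exact ⟨by ring, by ring⟩
    · show ((i + 5, j - 1) : ℤ × ℤ) + (7 * a, 7 * b) + dvec (((((i + 5, j - 1) : ℤ × ℤ) + ((7 * a : ℤ), (7 * b : ℤ))).1 - i) % 7) = ((i + 5, j) : ℤ × ℤ) + (7 * a, 7 * b)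
      rw [show (((((i + 5, j - 1) : ℤ × ℤ) + ((7 * a : ℤ), (7 * b : ℤ))).1 - i) % 7) = 5 from by show ((i + 5) + 7 * a - i) % 7 = 5; omega]
      rw [show dvec 5 = ((0 : ℤ), (1 : ℤ)) from rfl]
      simp only [Prod.mk_add_mk, Prod.mk.injEq]
      exact ⟨by ring, by ring⟩
    · show ((i + 4, j + 2) : ℤ × ℤ) + (7 * a, 7 * b) + dvec (((((i + 4, j + 2) : ℤ × ℤ) + ((7 * a : ℤ), (7 * b : ℤ))).1 - i) % 7) = ((i + 3, j + 1) : ℤ × ℤ) + (7 * a, 7 * b)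
      rw [show (((((i + 4, j + 2) : ℤ × ℤ) + ((7 * a : ℤ), (7 * b : ℤ))).1 - i) % 7) = 4 from by show ((i + 4) + 7 * a - i) % 7 = 4; omega]
      rw [show dvec 4 = ((-1 : ℤ), (-1 : ℤ)) from rfl]
      simp only [Prod.mk_add_mk, Prod.mk.injEq]
      exact ⟨by ring, by ring⟩
    · show ((i + 2, j + 1) : ℤ × ℤ) + (7 * a, 7 * b) + dvec (((((i + 2, j + 1) : ℤ × ℤ) + ((7 * a : ℤ), (7 * b : ℤ))).1 - i) % 7) = ((i + 1, j + 2) : ℤ × ℤ) + (7 * a, 7 * b)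
      rw [show (((((i + 2, j + 1) : ℤ × ℤ) + ((7 * a : ℤ), (7 * b : ℤ))).1 - i) % 7) = 2 from by show ((i + 2) + 7 * a - i) % 7 = 2; omega]
      rw [show dvec 2 = ((-1 : ℤ), (1 : ℤ)) from rfl]
      simp only [Prod.mk_add_mk, Prod.mk.injEq]
      exact ⟨by ring, by ring⟩
    · show ((i - 1, j + 3) : ℤ × ℤ) + (7 * a, 7 * b) + dvec (((((i - 1, j + 3) : ℤ × ℤ) + ((7 * a : ℤ), (7 * b : ℤ))).1 - i) % 7) = ((i - 1, j + 3) : ℤ × ℤ) + (7 * a, 7 * b)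
      rw [show (((((i - 1, j + 3) : ℤ × ℤ) + ((7 * a : ℤ), (7 * b : ℤ))).1 - i) % 7) = 6 from by show ((i - 1) + 7 * a - i) % 7 = 6; omega]
      rw [show dvec 6 = ((0 : ℤ), (0 : ℤ)) from rfl]
      simp only [Prod.mk_add_mk, Prod.mk.injEq]
      exact ⟨by ring, by ring⟩
  refine ⟨hpart1, hEU, fun u => u + dvec ((u.1 - i) % 7), htr, ?_, ?_, rfl⟩
  · have hmap : Set.MapsTo (fun u : ℤ × ℤ => u + dvec ((u.1 - i) % 7)) (Dset ((3 * i + j : ℤ) : ZMod 7)) (D'set ((i + 2 * (j - 1) : ℤ) : ZMod 7)) := by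
      intro u hu
      have hm : (3 * u.1 + u.2) % 7 = (3 * i + j) % 7 := (hDm u).mp hu
      show u + dvec ((u.1 - i) % 7) ∈ D'set ((i + 2 * (j - 1) : ℤ) : ZMod 7)
      rw [hD'm]
      have hcase : (u.1 - i) % 7 = 0 ∨ (u.1 - i) % 7 = 1 ∨ (u.1 - i) % 7 = 2 ∨ (u.1 - i) % 7 = 3 ∨ (u.1 - i) % 7 = 4 ∨ (u.1 - i) % 7 = 5 ∨ (u.1 - i) % 7 = 6 := by omega
      rcases hcase with h|h|h|h|h|h|h <;> rw [h]
      · rw [show dvec 0 = ((0 : ℤ), (-1 : ℤ)) from rfl]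
        simp only [Prod.fst_add, Prod.snd_add]
        exact (by omega : (u.1 + (0 : ℤ) + 2 * (u.2 + (-1 : ℤ))) % 7 = (i + 2 * (j - 1)) % 7)
      · rw [show dvec 1 = ((1 : ℤ), (1 : ℤ)) from rfl]
        simp only [Prod.fst_add, Prod.snd_add]
        exact (by omega : (u.1 + (1 : ℤ) + 2 * (u.2 + (1 : ℤ))) % 7 = (i + 2 * (j - 1)) % 7)
      · rw [show dvec 2 = ((-1 : ℤ), (1 : ℤ)) from rfl]
        simp only [Prod.fst_add, Prod.snd_add]
        exact (by omega : (u.1 + (-1 : ℤ) + 2 * (u.2 + (1 : ℤ))) % 7 = (i + 2 * (j - 1)) % 7)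
      · rw [show dvec 3 = ((1 : ℤ), (-1 : ℤ)) from rfl]
        simp only [Prod.fst_add, Prod.snd_add]
        exact (by omega : (u.1 + (1 : ℤ) + 2 * (u.2 + (-1 : ℤ))) % 7 = (i + 2 * (j - 1)) % 7)
      · rw [show dvec 4 = ((-1 : ℤ), (-1 : ℤ)) from rfl]
        simp only [Prod.fst_add, Prod.snd_add]
        exact (by omega : (u.1 + (-1 : ℤ) + 2 * (u.2 + (-1 : ℤ))) % 7 = (i + 2 * (j - 1)) % 7)
      · rw [show dvec 5 = ((0 : ℤ), (1 : ℤ)) from rfl]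
        simp only [Prod.fst_add, Prod.snd_add]
        exact (by omega : (u.1 + (0 : ℤ) + 2 * (u.2 + (1 : ℤ))) % 7 = (i + 2 * (j - 1)) % 7)
      · rw [show dvec 6 = ((0 : ℤ), (0 : ℤ)) from rfl]
        simp only [Prod.fst_add, Prod.snd_add]
        exact (by omega : (u.1 + (0 : ℤ) + 2 * (u.2 + (0 : ℤ))) % 7 = (i + 2 * (j - 1)) % 7)
    refine ⟨hmap, ?_, ?_⟩
    · intro u hu v hv huv
      obtain ⟨qu, hqu, -⟩ := hEU u hu
      obtain ⟨qv, hqv, -⟩ := hEU v hv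
      have h1 : (fun u : ℤ × ℤ => u + dvec ((u.1 - i) % 7)) u = (![(i, j - 1), (i + 2, j - 2), (i + 4, j - 3), (i + 5, j), (i + 3, j + 1), (i + 1, j + 2), (i - 1, j + 3)] : Fin 7 → ℤ × ℤ) qu.1 + (7 * qu.2.1, 7 * qu.2.2) := by
        rw [hqu]; exact htr qu.1 qu.2.1 qu.2.2
      have h2 : (fun u : ℤ × ℤ => u + dvec ((u.1 - i) % 7)) v = (![(i, j - 1), (i + 2, j - 2), (i + 4, j - 3), (i + 5, j), (i + 3, j + 1), (i + 1, j + 2), (i - 1, j + 3)] : Fin 7 → ℤ × ℤ) qv.1 + (7 * qv.2.1, 7 * qv.2.2) := by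
        rw [hqv]; exact htr qv.1 qv.2.1 qv.2.2
      obtain ⟨q0, hq0, huq⟩ := hEUT _ (hmap hu)
      have e1 : qu = q0 := huq qu h1
      have e2 : qv = q0 := huq qv (huv ▸ h2)
      rw [hqu, hqv, e1.trans e2.symm]
    · intro w hw
      obtain ⟨q, hq, -⟩ := hEUT w hw
      refine ⟨(![(i, j), (i + 1, j - 3), (i + 3, j - 2), (i + 5, j - 1), (i + 4, j + 2), (i + 2, j + 1), (i - 1, j + 3)] : Fin 7 → ℤ × ℤ) q.1 + (7 * q.2.1, 7 * q.2.2), hDt q.1 q.2.1 q.2.2, ?_⟩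
      rw [htr q.1 q.2.1 q.2.2]
      exact hq.symm
  · intro u hu
    show u + dvec ((u.1 - i) % 7) = u ∨ strongGridInf.Adj u (u + dvec ((u.1 - i) % 7))
    have hcase : (u.1 - i) % 7 = 0 ∨ (u.1 - i) % 7 = 1 ∨ (u.1 - i) % 7 = 2 ∨ (u.1 - i) % 7 = 3 ∨ (u.1 - i) % 7 = 4 ∨ (u.1 - i) % 7 = 5 ∨ (u.1 - i) % 7 = 6 := by omega
    rcases hcase with h|h|h|h|h|h|h <;> rw [h]
    · rw [show dvec 0 = (((0 : ℤ), (-1 : ℤ)) : ℤ × ℤ) from rfl]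
      exact Or.inr (adj_add u ((0 : ℤ), (-1 : ℤ)) (by decide) (by norm_num) (by norm_num))
    · rw [show dvec 1 = (((1 : ℤ), (1 : ℤ)) : ℤ × ℤ) from rfl]
      exact Or.inr (adj_add u ((1 : ℤ), (1 : ℤ)) (by decide) (by norm_num) (by norm_num))
    · rw [show dvec 2 = (((-1 : ℤ), (1 : ℤ)) : ℤ × ℤ) from rfl]
      exact Or.inr (adj_add u ((-1 : ℤ), (1 : ℤ)) (by decide) (by norm_num) (by norm_num))
    · rw [show dvec 3 = (((1 : ℤ), (-1 : ℤ)) : ℤ × ℤ) from rfl]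
      exact Or.inr (adj_add u ((1 : ℤ), (-1 : ℤ)) (by decide) (by norm_num) (by norm_num))
    · rw [show dvec 4 = (((-1 : ℤ), (-1 : ℤ)) : ℤ × ℤ) from rfl]
      exact Or.inr (adj_add u ((-1 : ℤ), (-1 : ℤ)) (by decide) (by norm_num) (by norm_num))
    · rw [show dvec 5 = (((0 : ℤ), (1 : ℤ)) : ℤ × ℤ) from rfl]
      exact Or.inr (adj_add u ((0 : ℤ), (1 : ℤ)) (by decide) (by norm_num) (by norm_num))
    · rw [show dvec 6 = (((0 : ℤ), (0 : ℤ)) : ℤ × ℤ) from rfl]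
      exact Or.inl (add_zero u)
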